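/- arXiv:1411.0816 — 2 statements merged into one kernel-verified Lean document; each statement's English description precedes it below -/
import Mathlib

section
/- For any w, B ∈ ℝ³, the map v ↦ v + w × B applied with w = (v⁺+v)/2 defines v⁺ uniquely: for every v ∈ ℝ³ and c ∈ ℝ, the equation v⁺ = v + c • ((v⁺ + v)/2) × B has a unique solution v⁺, since the linear map u ↦ u - (c/2) • u × B is invertible. -/
open Matrix

/-- The linear map `u ↦ u - (c/2) • (u × B)` is bijective, hence the implicit
Boris velocity update `v⁺ = v + c • ((v⁺ + v)/2) × B` has a unique solution. -/
theorem implicit_boris_update_well_defined (c : ℝ) (B : Fin 3 → ℝ) :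
    Function.Bijective (fun u : Fin 3 → ℝ => u - (c / 2) • crossProduct u B) ∧
    ∀ v : Fin 3 → ℝ, ∃! w : Fin 3 → ℝ,
      w = v + c • crossProduct ((2 : ℝ)⁻¹ • (w + v)) B := by
  set T : (Fin 3 → ℝ) →ₗ[ℝ] (Fin 3 → ℝ) :=
    LinearMap.id - (c / 2) • (LinearMap.flip (crossProduct) B) with hT
  have hTapp : ∀ u, T u = u - (c / 2) • crossProduct u B := by
    intro u; simp [hT]
  have hinj : Function.Injective T := by
    rw [← LinearMap.ker_eq_bot, LinearMap.ker_eq_bot']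
    intro u hu
    rw [hTapp] at hu
    have h1 : u = (c / 2) • crossProduct u B := sub_eq_zero.mp hu
    have h2 : u ⬝ᵥ u = 0 := by
      calc u ⬝ᵥ u = u ⬝ᵥ ((c / 2) • crossProduct u B) := by rw [← h1]
        _ = (c / 2) * (u ⬝ᵥ crossProduct u B) := by
            rw [dotProduct_smul]; rfl
        _ = 0 := by rw [dot_self_cross]; ring
    exact dotProduct_self_eq_zero.mp h2
  have hbij : Function.Bijective T :=
    ⟨hinj, (LinearMap.injective_iff_surjective).mp hinj⟩
  have hfun : (fun u : Fin 3 → ℝ => u - (c / 2) • crossProduct u B) = ⇑T :=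
    funext fun u => (hTapp u).symm
  constructor
  · rw [hfun]; exact hbij
  · intro v
    have heq : ∀ w : Fin 3 → ℝ,
        (w = v + c • crossProduct ((2 : ℝ)⁻¹ • (w + v)) B) ↔
          T w = v + (c / 2) • crossProduct v B := by
      intro w
      have hc : crossProduct ((2 : ℝ)⁻¹ • (w + v)) B
          = (2 : ℝ)⁻¹ • (crossProduct w B + crossProduct v B) := by
        simp [map_add]
      rw [hTapp, hc]
      constructor
      · intro h
        linear_combination (norm := module) h
      · intro h
        linear_combination (norm := module) h
    have := hbij.existsUnique (v + (c / 2) • crossProduct v B)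
    simpa only [heq] using this
end

section
/- The determinant of the linear map u ↦ u - a • (u × B) on ℝ³ equals 1 + a² ‖B‖². -/
/-- The determinant of the linear map `u ↦ u - a • (u × B)` on `ℝ³` equals
`1 + a² ‖B‖²`. -/
theorem det_boris_map (a : ℝ) (B : EuclideanSpace ℝ (Fin 3)) :
    LinearMap.det
      (LinearMap.id - a • (LinearMap.flip (crossProduct (R := ℝ)) B)) =
      1 + a ^ 2 * ‖B‖ ^ 2 := by
  rw [← LinearMap.det_toMatrix (Pi.basisFun ℝ (Fin 3)), Matrix.det_fin_three]
  simp [LinearMap.toMatrix_apply, crossProduct, EuclideanSpace.norm_eq,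
    Fin.sum_univ_three, Matrix.vecHead, Matrix.vecTail, Pi.single_apply, Function.comp, Real.sq_sqrt (by positivity : (0:ℝ) ≤ B 0 ^ 2 + B 1 ^ 2 + B 2 ^ 2)]
  ring
end
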